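/- Consider the biased assimilation model with $b_i \ge 1$ for all $i$ on a strongly connected graph. If $x_i(0) \ge 1/2$ for all $i$ and $x_j(0) > 1/2$ for at least one $j$, then $x_i(k) \to 1$ as $k \to \infty$ for every $i$. -/

import Mathlib

open Finset Filter Topology

/-- Weighted sum of neighbors' opinions: `s_i = ∑_{j ∈ N_i} w_{ij} x_j`. -/
noncomputable def wsum {N : ℕ} (w : Fin N → Fin N → ℝ) (Nbr : Fin N → Finset (Fin N))
    (x : Fin N → ℝ) (i : Fin N) : ℝ :=
  ∑ j ∈ Nbr i, w i j * x j

/-- Weighted degree `d_i = ∑_{j ∈ N_i} w_{ij}`. -/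
noncomputable def degw {N : ℕ} (w : Fin N → Fin N → ℝ) (Nbr : Fin N → Finset (Fin N))
    (i : Fin N) : ℝ :=
  ∑ j ∈ Nbr i, w i j

/-- Biased assimilation update map (componentwise). Powers are real powers. -/
noncomputable def F {N : ℕ} (w : Fin N → Fin N → ℝ) (Nbr : Fin N → Finset (Fin N))
    (b : Fin N → ℝ) (x : Fin N → ℝ) (i : Fin N) : ℝ :=
  (w i i * x i + x i ^ b i * wsum w Nbr x i) /
    (w i i + x i ^ b i * wsum w Nbr x i + (1 - x i) ^ b i * (degw w Nbr i - wsum w Nbr x i))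

/-- The directed influence graph (edge `j → i` iff `j ∈ Nbr i`) is strongly connected. -/
def StronglyConnected {N : ℕ} (Nbr : Fin N → Finset (Fin N)) : Prop :=
  ∀ i j : Fin N, Relation.TransGen (fun a c => a ∈ Nbr c) i j

/-- Lyapunov stability of a fixed point of the discrete-time system `x⁺ = G x`. -/
def LyapStable {E : Type*} [NormedAddCommGroup E] (G : E → E) (q : E) : Prop :=
  ∀ ε > 0, ∃ δ > 0, ∀ x, ‖x - q‖ < δ → ∀ k : ℕ, ‖G^[k] x - q‖ < ε

/-- Local exponential stability of a fixed point of `x⁺ = G x`. -/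
def LocExpStable {E : Type*} [NormedAddCommGroup E] (G : E → E) (q : E) : Prop :=
  ∃ δ > 0, ∃ C > 0, ∃ r, 0 ≤ r ∧ r < 1 ∧
    ∀ x, ‖x - q‖ ≤ δ → ∀ k : ℕ, ‖G^[k] x - q‖ ≤ C * r ^ k * ‖x - q‖

/-- Spectral radius of a real square matrix: supremum of moduli of its complex eigenvalues. -/
noncomputable def specRad {n : ℕ} (M : Matrix (Fin n) (Fin n) ℝ) : ℝ :=
  sSup {r : ℝ | ∃ μ : ℂ, (M.map (fun a => (a : ℂ))).charpoly.IsRoot μ ∧ r = ‖μ‖}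

-- key pointwise inequality
lemma key_ineq {b X s d : ℝ} (hb : 1 ≤ b) (hX : 1/2 ≤ X) (hX1 : X ≤ 1)
    (hds : d - s ≤ s) (hsd : s ≤ d) (hspos : 0 < s) :
    X * (1 - X) ^ b * (d - s) ≤ X ^ b * s * (1 - X) := by
  rcases eq_or_lt_of_le hX1 with rfl | hlt
  · simp [Real.zero_rpow (by linarith : b ≠ 0)]
  · have hXpos : (0:ℝ) < X := by linarith
    have h1X : (0:ℝ) < 1 - X := by linarith
    have e1 : X ^ b = X ^ (b - 1) * X := by
      rw [← Real.rpow_add_one hXpos.ne']; ring_nf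
    have e2 : (1 - X) ^ b = (1 - X) ^ (b - 1) * (1 - X) := by
      rw [← Real.rpow_add_one h1X.ne']; ring_nf
    have hmono : (1 - X) ^ (b - 1) ≤ X ^ (b - 1) :=
      Real.rpow_le_rpow (by linarith) (by linarith) (by linarith)
    have hp1 : (0:ℝ) < (1 - X) ^ (b - 1) := Real.rpow_pos_of_pos h1X _
    have hXp1 : (0:ℝ) < X ^ (b - 1) := Real.rpow_pos_of_pos hXpos _
    have hc : (1 - X) ^ (b - 1) * (d - s) ≤ X ^ (b - 1) * s := by
      rcases le_or_gt 0 (d - s) with h | h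
      · calc (1 - X) ^ (b - 1) * (d - s) ≤ X ^ (b - 1) * (d - s) :=
              mul_le_mul_of_nonneg_right hmono h
          _ ≤ X ^ (b - 1) * s := mul_le_mul_of_nonneg_left hds hXp1.le
      · nlinarith
    rw [e1, e2]
    nlinarith [mul_le_mul_of_nonneg_right hc (mul_pos hXpos h1X).le]

lemma step_bounds {N : ℕ} (w : Fin N → Fin N → ℝ) (Nbr : Fin N → Finset (Fin N)) (b : Fin N → ℝ)
    (hw : ∀ i, ∀ j ∈ Nbr i, 0 < w i j) (hwii : ∀ i, 0 ≤ w i i) (hb : ∀ i, 1 ≤ b i)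
    (hne : ∀ i, (Nbr i).Nonempty)
    (y : Fin N → ℝ) (hy : ∀ i, 1/2 ≤ y i ∧ y i ≤ 1) (i : Fin N) :
    y i ≤ F w Nbr b y i ∧ F w Nbr b y i ≤ 1 := by
  set s := wsum w Nbr y i with hs_def
  set d := degw w Nbr i with hd_def
  have hd : 0 < d := Finset.sum_pos (fun j hj => hw i j hj) (hne i)
  have hsd : s ≤ d := Finset.sum_le_sum (fun j hj => by
    have := (hy j).2; nlinarith [hw i j hj])
  have hhalf : d / 2 ≤ s := by
    rw [hd_def, degw, Finset.sum_div]
    exact Finset.sum_le_sum (fun j hj => by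
      have := (hy j).1; nlinarith [hw i j hj])
  have hspos : 0 < s := lt_of_lt_of_le (by linarith) hhalf
  have hds : d - s ≤ s := by linarith
  have h0ds : 0 ≤ d - s := by linarith
  obtain ⟨hX, hX1⟩ := hy i
  have hXpos : (0:ℝ) < y i := by linarith
  have hXb : 0 < y i ^ b i := Real.rpow_pos_of_pos hXpos _
  have h1Xb : 0 ≤ (1 - y i) ^ b i := Real.rpow_nonneg (by linarith) _
  have hD : 0 < w i i + y i ^ b i * s + (1 - y i) ^ b i * (d - s) := by
    have := mul_pos hXb hspos
    nlinarith [hwii i, mul_nonneg h1Xb h0ds]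
  have key := key_ineq (hb i) hX hX1 hds hsd hspos
  constructor
  · rw [F, ← hs_def, ← hd_def, le_div_iff₀ hD]
    nlinarith
  · rw [F, ← hs_def, ← hd_def, div_le_one hD]
    nlinarith [mul_nonneg h1Xb h0ds, hwii i]

lemma sd_facts {N : ℕ} (w : Fin N → Fin N → ℝ) (Nbr : Fin N → Finset (Fin N))
    (hw : ∀ i, ∀ j ∈ Nbr i, 0 < w i j) (hne : ∀ i, (Nbr i).Nonempty)
    (y : Fin N → ℝ) (hy : ∀ i, 1/2 ≤ y i ∧ y i ≤ 1) (i : Fin N) :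
    0 < degw w Nbr i ∧ wsum w Nbr y i ≤ degw w Nbr i ∧
      degw w Nbr i / 2 ≤ wsum w Nbr y i := by
  refine ⟨Finset.sum_pos (fun j hj => hw i j hj) (hne i), ?_, ?_⟩
  · exact Finset.sum_le_sum (fun j hj => by have := (hy j).2; nlinarith [hw i j hj])
  · rw [degw, Finset.sum_div]
    exact Finset.sum_le_sum (fun j hj => by have := (hy j).1; nlinarith [hw i j hj])

lemma fixed_half {N : ℕ} (w : Fin N → Fin N → ℝ) (Nbr : Fin N → Finset (Fin N)) (b : Fin N → ℝ)
    (hw : ∀ i, ∀ j ∈ Nbr i, 0 < w i j) (hwii : ∀ i, 0 ≤ w i i) (hb : ∀ i, 1 ≤ b i)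
    (hne : ∀ i, (Nbr i).Nonempty)
    (L : Fin N → ℝ) (hL : ∀ i, 1/2 ≤ L i ∧ L i ≤ 1) (i : Fin N)
    (hfix : F w Nbr b L i = L i) (hlt : L i < 1) :
    ∀ a ∈ Nbr i, L a = 1/2 := by
  obtain ⟨hd, hsd, hhalf⟩ := sd_facts w Nbr hw hne L hL i
  set s := wsum w Nbr L i with hs_def
  set d := degw w Nbr i with hd_def
  have hspos : 0 < s := lt_of_lt_of_le (by linarith) hhalf
  have hds : d - s ≤ s := by linarith
  obtain ⟨hX, hX1⟩ := hL i
  set X := L i with hX_def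
  have hXpos : (0:ℝ) < X := by linarith
  have h1X : (0:ℝ) < 1 - X := by linarith
  have hXb : 0 < X ^ b i := Real.rpow_pos_of_pos hXpos _
  have h1Xb : 0 ≤ (1 - X) ^ b i := Real.rpow_nonneg (by linarith) _
  have hD : 0 < w i i + X ^ b i * s + (1 - X) ^ b i * (d - s) := by
    have := mul_pos hXb hspos
    rcases le_or_gt 0 (d - s) with h | h
    · nlinarith [hwii i, mul_nonneg h1Xb h]
    · -- if d < s it cannot be, since s ≤ d
      linarith
  rw [F, ← hs_def, ← hd_def, ← hX_def] at hfix
  have hnum : w i i * X + X ^ b i * s =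
      X * (w i i + X ^ b i * s + (1 - X) ^ b i * (d - s)) :=
    (div_eq_iff hD.ne').mp hfix
  have heq : X ^ b i * s * (1 - X) = X * (1 - X) ^ b i * (d - s) := by
    linear_combination hnum
  have e1 : X ^ b i = X ^ (b i - 1) * X := by
    rw [← Real.rpow_add_one hXpos.ne']; ring_nf
  have e2 : (1 - X) ^ b i = (1 - X) ^ (b i - 1) * (1 - X) := by
    rw [← Real.rpow_add_one h1X.ne']; ring_nf
  rw [e1, e2] at heq
  have h2 : X ^ (b i - 1) * s = (1 - X) ^ (b i - 1) * (d - s) := by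
    apply mul_left_cancel₀ (ne_of_gt (mul_pos hXpos h1X))
    linear_combination heq
  have hmono : (1 - X) ^ (b i - 1) ≤ X ^ (b i - 1) :=
    Real.rpow_le_rpow (by linarith) (by linarith) (by linarith [hb i])
  have hp1 : 0 < (1 - X) ^ (b i - 1) := Real.rpow_pos_of_pos h1X _
  have hseq : d - s = s := by
    by_contra hne'
    have hstrict : d - s < s := lt_of_le_of_ne hds hne'
    have f1 : 0 < (1 - X) ^ (b i - 1) * (s - (d - s)) :=
      mul_pos hp1 (by linarith)
    have f2 : 0 ≤ (X ^ (b i - 1) - (1 - X) ^ (b i - 1)) * s :=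
      mul_nonneg (by linarith) hspos.le
    nlinarith
  -- now 2s = d, deduce all neighbors at 1/2
  have hsum0 : ∑ j ∈ Nbr i, w i j * (2 * L j - 1) = 0 := by
    have : ∑ j ∈ Nbr i, w i j * (2 * L j - 1) = 2 * s - d := by
      rw [hs_def, hd_def, wsum, degw, Finset.mul_sum, ← Finset.sum_sub_distrib]
      exact Finset.sum_congr rfl (fun j _ => by ring)
    rw [this]; linarith
  intro a ha
  have := (Finset.sum_eq_zero_iff_of_nonneg (fun j hj => by
    have := (hL j).1; nlinarith [hw i j hj])).mp hsum0 a ha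
  have hwa := hw i a ha
  rcases mul_eq_zero.mp this with h | h
  · exact absurd h hwa.ne'
  · linarith

theorem stmt8 {N : ℕ} (w : Fin N → Fin N → ℝ) (Nbr : Fin N → Finset (Fin N)) (b : Fin N → ℝ)
    (hsc : StronglyConnected Nbr)
    (hw : ∀ i, ∀ j ∈ Nbr i, 0 < w i j) (hwii : ∀ i, 0 ≤ w i i) (hb : ∀ i, 1 ≤ b i)
    (x : ℕ → Fin N → ℝ) (hupd : ∀ k, x (k + 1) = F w Nbr b (x k))
    (h0 : ∀ i, 1/2 ≤ x 0 i ∧ x 0 i ≤ 1) (hj : ∃ j, 1/2 < x 0 j) :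
    ∀ i, Tendsto (fun k => x k i) atTop (nhds 1) := by
  have hne : ∀ i, (Nbr i).Nonempty := by
    intro i
    cases hsc i i with
    | single h => exact ⟨_, h⟩
    | tail _ h => exact ⟨_, h⟩
  have hbnd : ∀ k i, 1/2 ≤ x k i ∧ x k i ≤ 1 := by
    intro k
    induction k with
    | zero => exact h0
    | succ k ih =>
      intro i
      rw [hupd k]
      obtain ⟨h1, h2⟩ := step_bounds w Nbr b hw hwii hb hne (x k) ih i
      exact ⟨le_trans (ih i).1 h1, h2⟩
  have hmono : ∀ i, Monotone (fun k => x k i) := fun i =>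
    monotone_nat_of_le_succ (fun k => by
      rw [hupd k]
      exact (step_bounds w Nbr b hw hwii hb hne (x k) (hbnd k) i).1)
  have hbdd : ∀ i, BddAbove (Set.range fun k => x k i) := fun i =>
    ⟨1, by rintro _ ⟨k, rfl⟩; exact (hbnd k i).2⟩
  set L : Fin N → ℝ := fun i => ⨆ k, x k i with hL_def
  have htend : ∀ i, Tendsto (fun k => x k i) atTop (nhds (L i)) := fun i =>
    tendsto_atTop_ciSup (hmono i) (hbdd i)
  have hLb : ∀ i, 1/2 ≤ L i ∧ L i ≤ 1 := fun i =>
    ⟨le_trans (h0 i).1 (le_ciSup (hbdd i) 0), ciSup_le fun k => (hbnd k i).2⟩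
  obtain ⟨j, hjx⟩ := hj
  have hLj : 1/2 < L j := lt_of_lt_of_le hjx (le_ciSup (hbdd j) 0)
  have hfix : ∀ i, F w Nbr b L i = L i := by
    intro i
    obtain ⟨hd, hsd, hhalf⟩ := sd_facts w Nbr hw hne L hLb i
    have hspos : 0 < wsum w Nbr L i := lt_of_lt_of_le (by linarith) hhalf
    have hXb : 0 < L i ^ b i := Real.rpow_pos_of_pos (by linarith [(hLb i).1]) _
    have h1Xb : 0 ≤ (1 - L i) ^ b i := Real.rpow_nonneg (by linarith [(hLb i).2]) _
    have hD : 0 < w i i + L i ^ b i * wsum w Nbr L i +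
        (1 - L i) ^ b i * (degw w Nbr i - wsum w Nbr L i) := by
      have := mul_pos hXb hspos
      nlinarith [hwii i, mul_nonneg h1Xb (by linarith : (0:ℝ) ≤ degw w Nbr i - wsum w Nbr L i)]
    have hst : Tendsto (fun k => wsum w Nbr (x k) i) atTop (nhds (wsum w Nbr L i)) := by
      simp only [wsum]
      exact tendsto_finset_sum _ (fun a _ => (htend a).const_mul _)
    have hp1 : Tendsto (fun k => x k i ^ b i) atTop (nhds (L i ^ b i)) :=
      ((Real.continuousAt_rpow_const (L i) (b i)
        (Or.inl (by have := (hLb i).1; intro h; rw [h] at this; norm_num at this))).tendsto).comp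
        (htend i)
    have hp2 : Tendsto (fun k => (1 - x k i) ^ b i) atTop (nhds ((1 - L i) ^ b i)) :=
      ((Real.continuousAt_rpow_const (1 - L i) (b i)
        (Or.inr (by linarith [hb i]))).tendsto).comp (tendsto_const_nhds.sub (htend i))
    have hnum : Tendsto (fun k => w i i * x k i + x k i ^ b i * wsum w Nbr (x k) i) atTop
        (nhds (w i i * L i + L i ^ b i * wsum w Nbr L i)) :=
      ((htend i).const_mul _).add (hp1.mul hst)
    have hden : Tendsto (fun k => w i i + x k i ^ b i * wsum w Nbr (x k) i +
        (1 - x k i) ^ b i * (degw w Nbr i - wsum w Nbr (x k) i)) atTop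
        (nhds (w i i + L i ^ b i * wsum w Nbr L i +
          (1 - L i) ^ b i * (degw w Nbr i - wsum w Nbr L i))) :=
      (tendsto_const_nhds.add (hp1.mul hst)).add (hp2.mul (tendsto_const_nhds.sub hst))
    have hFt : Tendsto (fun k => F w Nbr b (x k) i) atTop (nhds (F w Nbr b L i)) := by
      simp only [F]
      exact hnum.div hden hD.ne'
    have hFt2 : Tendsto (fun k => x (k+1) i) atTop (nhds (F w Nbr b L i)) := by
      simpa only [← hupd] using hFt
    have h1 : Tendsto (fun k => x (k+1) i) atTop (nhds (L i)) :=
      (htend i).comp (tendsto_add_atTop_nat 1)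
    exact tendsto_nhds_unique hFt2 h1
  have claim : ∀ a i : Fin N, Relation.TransGen (fun a c => a ∈ Nbr c) a i → L i < 1 →
      L a = 1/2 := by
    intro a i h
    induction h using Relation.TransGen.head_induction_on with
    | single h' =>
      intro hlt
      exact fixed_half w Nbr b hw hwii hb hne L hLb i (hfix i) hlt _ h'
    | head h' htrans ihc =>
      intro hlt
      have hc := ihc hlt
      refine fixed_half w Nbr b hw hwii hb hne L hLb _ (hfix _) ?_ _ h'
      rw [hc]; norm_num
  have hL1 : ∀ i, L i = 1 := by
    intro i
    by_contra hne1
    have hlt : L i < 1 := lt_of_le_of_ne (hLb i).2 hne1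
    have := claim j i (hsc j i) hlt
    linarith
  intro i
  have h := htend i
  rw [hL1 i] at h
  exact h
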